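/- arXiv:1304.4924 — 2 statements merged into one kernel-verified Lean document; each statement's English description precedes it below -/
import Mathlib

section
/- Let ρ > 0, let Q = (−ρ, ρ) × (−ρ, ρ) ⊂ ℝ² be the open square, let θ ∈ ℝ be such that θ/π is irrational, and let R_φ denote the rotation of ℝ² by angle φ about the origin. Then the set Ω = ⋂_{n ∈ ℤ} R_{nθ}(Q) satisfies ball(0, ρ) ⊆ Ω ⊆ closedBall(0, ρ), where ball(0, ρ) and closedBall(0, ρ) are the open and closed Euclidean balls of radius ρ centered at the origin. -/
open Real

/-- The subgroup `ℤθ + ℤ(2π)` is dense in `ℝ` when `θ/π` is irrational. -/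
lemma dense_zsmul_theta_add_zsmul_two_pi (θ : ℝ) (hθ : Irrational (θ / π)) :
    Dense ((AddSubgroup.closure ({θ, 2 * π} : Set ℝ) : AddSubgroup ℝ) : Set ℝ) := by
  rcases (AddSubgroup.closure ({θ, 2 * π} : Set ℝ)).dense_or_cyclic with h | ⟨a, ha⟩
  · exact h
  · exfalso
    have hθmem : θ ∈ AddSubgroup.closure ({θ, 2 * π} : Set ℝ) :=
      AddSubgroup.subset_closure (by simp)
    have hπmem : 2 * π ∈ AddSubgroup.closure ({θ, 2 * π} : Set ℝ) :=
      AddSubgroup.subset_closure (by simp)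
    rw [ha, AddSubgroup.mem_closure_singleton] at hθmem hπmem
    obtain ⟨m, hm⟩ := hθmem
    obtain ⟨n, hn⟩ := hπmem
    have hn0 : (n : ℝ) ≠ 0 := by
      intro h
      have : n = 0 := by exact_mod_cast h
      rw [this] at hn
      simp at hn
    apply hθ
    refine ⟨(2 * m : ℚ) / n, ?_⟩
    have hπ0 : (π : ℝ) ≠ 0 := Real.pi_ne_zero
    have hmr : (m : ℝ) * a = θ := by rw [← hm]; simp [zsmul_eq_mul]
    have hnr : (n : ℝ) * a = 2 * π := by rw [← hn]; simp [zsmul_eq_mul]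
    have key : (n : ℝ) * θ = 2 * m * π := by
      linear_combination (m : ℝ) * hnr - (n : ℝ) * hmr
    push_cast
    field_simp
    linarith [key]

/-- For the open square `Q = (-ρ, ρ) × (-ρ, ρ)` and `θ` with `θ/π` irrational, the set
`Ω = ⋂_{n ∈ ℤ} R_{nθ}(Q)` (where `R_φ` is rotation by `φ`) satisfies
`ball 0 ρ ⊆ Ω ⊆ closedBall 0 ρ`. -/
theorem iInter_rotated_squares_between_balls
    (ρ : ℝ) (hρ : 0 < ρ)
    (Q : Set (EuclideanSpace ℝ (Fin 2)))
    (hQ : Q = {p | p 0 ∈ Set.Ioo (-ρ) ρ ∧ p 1 ∈ Set.Ioo (-ρ) ρ})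
    (θ : ℝ) (hθ : Irrational (θ / π))
    (Rot : ℝ → EuclideanSpace ℝ (Fin 2) → EuclideanSpace ℝ (Fin 2))
    (hRot : ∀ φ p, Rot φ p = ![cos φ * p 0 - sin φ * p 1,
                               sin φ * p 0 + cos φ * p 1])
    (Ω : Set (EuclideanSpace ℝ (Fin 2)))
    (hΩ : Ω = ⋂ n : ℤ, Rot (n * θ) '' Q) :
    Metric.ball (0 : EuclideanSpace ℝ (Fin 2)) ρ ⊆ Ω ∧
      Ω ⊆ Metric.closedBall (0 : EuclideanSpace ℝ (Fin 2)) ρ := by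
  -- the squared norm of a point
  have normsq : ∀ x : EuclideanSpace ℝ (Fin 2), ‖x‖ ^ 2 = (x 0) ^ 2 + (x 1) ^ 2 := by
    intro x
    rw [EuclideanSpace.norm_eq]
    rw [Real.sq_sqrt (by positivity)]
    simp [Fin.sum_univ_two, sq_abs]
  constructor
  · -- ball ⊆ Ω
    intro x hx
    rw [mem_ball_zero_iff] at hx
    rw [hΩ]
    refine Set.mem_iInter.2 fun n => ?_
    set φ : ℝ := (n : ℤ) * θ with hφ
    refine ⟨Rot (-φ) x, ?_, ?_⟩
    · rw [hQ]
      have h0 : (Rot (-φ) x) 0 = cos φ * x 0 + sin φ * x 1 := by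
        rw [hRot]; simp [Real.cos_neg, Real.sin_neg]; try ring
      have h1 : (Rot (-φ) x) 1 = -sin φ * x 0 + cos φ * x 1 := by
        rw [hRot]; simp [Real.cos_neg, Real.sin_neg]; try ring
      have hsum : ((Rot (-φ) x) 0) ^ 2 + ((Rot (-φ) x) 1) ^ 2 = (x 0) ^ 2 + (x 1) ^ 2 := by
        rw [h0, h1]
        have := Real.sin_sq_add_cos_sq φ
        nlinarith [this]
      have hxn : (x 0) ^ 2 + (x 1) ^ 2 < ρ ^ 2 := by
        rw [← normsq x]
        have h1 : ‖x‖ ≥ 0 := norm_nonneg x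
        nlinarith
      constructor
      · constructor
        · nlinarith [sq_nonneg ((Rot (-φ) x) 1), sq_nonneg ((Rot (-φ) x) 0 + ρ)]
        · nlinarith [sq_nonneg ((Rot (-φ) x) 1), sq_nonneg ((Rot (-φ) x) 0 - ρ)]
      · constructor
        · nlinarith [sq_nonneg ((Rot (-φ) x) 0), sq_nonneg ((Rot (-φ) x) 1 + ρ)]
        · nlinarith [sq_nonneg ((Rot (-φ) x) 0), sq_nonneg ((Rot (-φ) x) 1 - ρ)]
    · ext i
      have h0 : (Rot (-φ) x) 0 = cos φ * x 0 + sin φ * x 1 := by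
        rw [hRot]; simp [Real.cos_neg, Real.sin_neg]; try ring
      have h1 : (Rot (-φ) x) 1 = -sin φ * x 0 + cos φ * x 1 := by
        rw [hRot]; simp [Real.cos_neg, Real.sin_neg]; try ring
      have hpyth := Real.sin_sq_add_cos_sq φ
      fin_cases i
      · show (Rot φ (Rot (-φ) x)) 0 = x 0
        rw [hRot]
        simp only [Matrix.cons_val_zero]
        rw [h0, h1]
        linear_combination x 0 * hpyth
      · show (Rot φ (Rot (-φ) x)) 1 = x 1
        rw [hRot]
        simp only [Matrix.cons_val_one, Matrix.head_cons, Matrix.cons_val_zero]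
        rw [h0, h1]
        linear_combination x 1 * hpyth
  · -- Ω ⊆ closedBall
    intro x hx
    rw [mem_closedBall_zero_iff]
    by_contra hlt
    push_neg at hlt
    set r : ℝ := ‖x‖ with hr
    have hr0 : 0 < r := lt_trans hρ hlt
    -- key consequence: for all n, |cos(nθ) x0 + sin(nθ) x1| < ρ
    have key : ∀ n : ℤ, cos ((n : ℝ) * θ) * x 0 + sin ((n : ℝ) * θ) * x 1 ∈
        Set.Ioo (-ρ) ρ := by
      intro n
      rw [hΩ] at hx
      have := Set.mem_iInter.1 hx n
      obtain ⟨q, hqQ, hqx⟩ := this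
      rw [hQ] at hqQ
      set φ : ℝ := (n : ℝ) * θ
      have hx0 : x 0 = cos φ * q 0 - sin φ * q 1 := by
        rw [← hqx, hRot]; simp
      have hx1 : x 1 = sin φ * q 0 + cos φ * q 1 := by
        rw [← hqx, hRot]; simp
      have hpyth := Real.sin_sq_add_cos_sq φ
      have : cos φ * x 0 + sin φ * x 1 = q 0 := by
        rw [hx0, hx1]; linear_combination q 0 * hpyth
      rw [this]
      exact hqQ.1
    -- polar coordinates via complex numbers
    set z : ℂ := ⟨x 0, x 1⟩ with hz
    have habs : ‖z‖ = r := by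
      rw [hr]
      rw [Complex.norm_def, Complex.normSq_apply]
      rw [EuclideanSpace.norm_eq]
      congr 1
      simp [Fin.sum_univ_two, sq_abs, hz]
      ring
    have hz0 : z ≠ 0 := by
      intro h
      rw [h] at habs
      simp at habs
      linarith
    set ψ : ℝ := z.arg with hψ
    have hcos : x 0 = r * Real.cos ψ := by
      rw [hψ, Complex.cos_arg hz0, habs]
      field_simp
      rfl
    have hsin : x 1 = r * Real.sin ψ := by
      rw [hψ, Complex.sin_arg, habs]
      field_simp
      rfl
    -- choose ε
    set ε : ℝ := Real.sqrt ((r - ρ) / r) with hε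
    have hε0 : 0 < ε := Real.sqrt_pos.2 (div_pos (by linarith) hr0)
    -- density
    have hdense := dense_zsmul_theta_add_zsmul_two_pi θ hθ
    have hψcl : ψ ∈ closure ((AddSubgroup.closure ({θ, 2 * π} : Set ℝ) : AddSubgroup ℝ) :
        Set ℝ) := hdense ψ
    rw [Metric.mem_closure_iff] at hψcl
    obtain ⟨s, hsS, hdist⟩ := hψcl ε hε0
    rw [SetLike.mem_coe, AddSubgroup.mem_closure_pair] at hsS
    obtain ⟨m, k, hmk⟩ := hsS
    have hs : s = (m : ℝ) * θ + (k : ℝ) * (2 * π) := by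
      rw [← hmk]; simp [zsmul_eq_mul]
    -- estimate cos(mθ - ψ)
    have hcosper : Real.cos ((m : ℝ) * θ - ψ) = Real.cos (s - ψ) := by
      have : s - ψ - (k : ℝ) * (2 * π) = (m : ℝ) * θ - ψ := by rw [hs]; ring
      rw [← this, Real.cos_sub_int_mul_two_pi]
    have hsq : (s - ψ) ^ 2 < ε ^ 2 := by
      have h1 : |s - ψ| < ε := by
        rw [abs_sub_comm]
        rwa [Real.dist_eq] at hdist
      nlinarith [abs_nonneg (s - ψ), sq_abs (s - ψ)]
    have hε2 : ε ^ 2 = (r - ρ) / r := Real.sq_sqrt (div_pos (by linarith) hr0).le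
    have hcoslb : Real.cos ((m : ℝ) * θ - ψ) > 1 - (r - ρ) / (2 * r) := by
      rw [hcosper]
      have := Real.one_sub_sq_div_two_le_cos (x := s - ψ)
      have h2 : (s - ψ) ^ 2 / 2 < (r - ρ) / (2 * r) := by
        rw [hε2] at hsq
        calc (s - ψ) ^ 2 / 2 < ((r - ρ) / r) / 2 := by linarith
          _ = (r - ρ) / (2 * r) := by rw [div_div, mul_comm]
      linarith
    -- contradiction with key m
    have hkey := (key m).2
    have hval : cos ((m : ℝ) * θ) * x 0 + sin ((m : ℝ) * θ) * x 1
        = r * Real.cos ((m : ℝ) * θ - ψ) := by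
      rw [hcos, hsin, Real.cos_sub]
      ring
    rw [hval] at hkey
    have : r * Real.cos ((m : ℝ) * θ - ψ) > r * (1 - (r - ρ) / (2 * r)) := by
      exact (mul_lt_mul_iff_right₀ hr0).2 hcoslb
    have hfinal : r * (1 - (r - ρ) / (2 * r)) = (r + ρ) / 2 := by
      field_simp
      ring
    rw [hfinal] at this
    linarith
end

section
/- Let ρ > 0, let Q = (−ρ, ρ) × (−ρ, ρ) ⊂ ℝ² be the open square, let θ ∈ ℝ be such that θ/π is irrational, and let R_φ denote the rotation of ℝ² by angle φ about the origin. Then the set Ω = ⋂_{n ∈ ℤ} R_{nθ}(Q) is not an open subset of ℝ². -/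
open Real

/-- For the open square `Q = (-ρ, ρ) × (-ρ, ρ)` and `θ` with `θ/π` irrational, the set
`Ω = ⋂_{n ∈ ℤ} R_{nθ}(Q)` is not open in `ℝ²`. -/
theorem not_isOpen_iInter_rotated_squares
    (ρ : ℝ) (hρ : 0 < ρ)
    (Q : Set (EuclideanSpace ℝ (Fin 2)))
    (hQ : Q = {p | p 0 ∈ Set.Ioo (-ρ) ρ ∧ p 1 ∈ Set.Ioo (-ρ) ρ})
    (θ : ℝ) (hθ : Irrational (θ / π))
    (Rot : ℝ → EuclideanSpace ℝ (Fin 2) → EuclideanSpace ℝ (Fin 2))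
    (hRot : ∀ φ p, Rot φ p = ![cos φ * p 0 - sin φ * p 1,
                               sin φ * p 0 + cos φ * p 1])
    (Ω : Set (EuclideanSpace ℝ (Fin 2)))
    (hΩ : Ω = ⋂ n : ℤ, Rot (n * θ) '' Q) :
    ¬ IsOpen Ω := by
  intro hOpen
  have hπ : (0:ℝ) < π := Real.pi_pos
  -- composition of rotations
  have hcomp : ∀ φ ψ q, Rot φ (Rot ψ q) = Rot (φ + ψ) q := by
    intro φ ψ q
    ext i
    simp only [hRot]
    fin_cases i <;>
      simp [Matrix.cons_val_zero, Matrix.cons_val_one, Matrix.head_cons, cos_add, sin_add] <;>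
      ring
  have hzero : ∀ q, Rot 0 q = q := by
    intro q
    ext i
    simp only [hRot]
    fin_cases i <;> simp
  have hmem : ∀ φ q, q ∈ Rot φ '' Q ↔ Rot (-φ) q ∈ Q := by
    intro φ q
    constructor
    · rintro ⟨x, hx, rfl⟩
      rw [hcomp, neg_add_cancel, hzero]; exact hx
    · intro h
      exact ⟨_, h, by rw [hcomp, add_neg_cancel, hzero]⟩
  have hL4 : ∀ φ r t, Rot φ (!₂[r * cos t, r * sin t] : EuclideanSpace ℝ (Fin 2)) =
      !₂[r * cos (t + φ), r * sin (t + φ)] := by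
    intro φ r t
    ext i
    simp only [hRot]
    fin_cases i <;>
      simp [PiLp.toLp_apply, Matrix.cons_val_zero, Matrix.cons_val_one, Matrix.head_cons, cos_add, sin_add] <;>
      ring
  -- irrationality consequence
  have hirr : ∀ m n : ℤ, n ≠ 0 → (n:ℝ) * θ ≠ (m:ℝ) * π := by
    intro m n hn h
    have hn' : (n:ℝ) ≠ 0 := Int.cast_ne_zero.mpr hn
    refine hθ ⟨(m:ℚ)/(n:ℚ), ?_⟩
    push_cast
    rw [div_eq_div_iff hn' hπ.ne']
    linarith
  -- the point p on the circle of radius ρ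
  set p : EuclideanSpace ℝ (Fin 2) := !₂[ρ * cos (θ/2), ρ * sin (θ/2)] with hp
  have hpmem : p ∈ Ω := by
    rw [hΩ, Set.mem_iInter]
    intro n
    rw [hmem, hp, hL4, hQ]
    set s := θ/2 + -((n:ℝ)*θ) with hs
    have hsin : sin s ≠ 0 := by
      intro h0
      obtain ⟨k, hk⟩ := Real.sin_eq_zero_iff.mp h0
      refine hirr (2*k) (1 - 2*n) (by omega) ?_
      push_cast
      rw [hs] at hk
      push_cast at hk
      linarith
    have hcos : cos s ≠ 0 := by
      intro h0
      obtain ⟨k, hk⟩ := Real.cos_eq_zero_iff.mp h0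
      refine hirr (2*k+1) (1 - 2*n) (by omega) ?_
      push_cast
      rw [hs] at hk
      push_cast at hk
      linarith
    have h2 : (0:ℝ) < sin s ^ 2 := lt_of_le_of_ne (sq_nonneg _) (Ne.symm (pow_ne_zero 2 hsin))
    have h3 : (0:ℝ) < cos s ^ 2 := lt_of_le_of_ne (sq_nonneg _) (Ne.symm (pow_ne_zero 2 hcos))
    have hpyth := Real.sin_sq_add_cos_sq s
    simp only [Set.mem_setOf_eq, PiLp.toLp_apply, Matrix.cons_val_zero, Matrix.cons_val_one, Matrix.head_cons,
      Set.mem_Ioo]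
    refine ⟨⟨?_, ?_⟩, ?_, ?_⟩ <;> nlinarith [sq_nonneg (cos s - 1), sq_nonneg (cos s + 1),
      sq_nonneg (sin s - 1), sq_nonneg (sin s + 1)]
  -- density of {nθ + 2kπ}
  have hdense : ∀ δ : ℝ, 0 < δ → ∃ n k : ℤ, |(n:ℝ)*θ - (θ/2 + 2*(k:ℝ)*π)| < δ := by
    have h2π : θ ∈ AddSubgroup.closure ({θ, 2*π} : Set ℝ) :=
      AddSubgroup.subset_closure (by simp)
    have h2π' : 2*π ∈ AddSubgroup.closure ({θ, 2*π} : Set ℝ) :=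
      AddSubgroup.subset_closure (by simp)
    rcases (AddSubgroup.closure ({θ, 2*π} : Set ℝ)).dense_or_cyclic with hd | ⟨a, ha⟩
    · intro δ hδ
      have := hd (θ/2)
      rw [Metric.mem_closure_iff] at this
      obtain ⟨g, hgS, hgd⟩ := this δ hδ
      rw [SetLike.mem_coe, AddSubgroup.mem_closure_pair] at hgS
      obtain ⟨m, n, hmn⟩ := hgS
      refine ⟨m, -n, ?_⟩
      have : (m:ℝ)*θ - (θ/2 + 2*(-n:ℤ)*π) = g - θ/2 := by
        rw [← hmn]
        push_cast
        simp [zsmul_eq_mul]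
        ring
      rw [this]
      rw [Real.dist_eq, abs_sub_comm] at hgd
      exact hgd
    · exfalso
      rw [ha, AddSubgroup.mem_closure_singleton] at h2π h2π'
      obtain ⟨m, hm⟩ := h2π
      obtain ⟨n, hn⟩ := h2π'
      have hn0 : n ≠ 0 := by
        rintro rfl
        rw [zero_zsmul] at hn
        have := Real.pi_pos
        linarith
      refine hirr (2*m) n hn0 ?_
      have : (n:ℝ) * θ = (m:ℝ) * (2*π) := by
        rw [← hm, ← hn]
        simp [zsmul_eq_mul]
        ring
      push_cast
      linarith
  -- Lipschitz bounds for sin and cos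
  have hlipc : ∀ a b : ℝ, |cos a - cos b| ≤ |a - b| := by
    intro a b
    rw [Real.cos_sub_cos]
    calc |(-2) * sin ((a+b)/2) * sin ((a-b)/2)|
        = 2 * |sin ((a+b)/2)| * |sin ((a-b)/2)| := by
          rw [abs_mul, abs_mul]; norm_num
      _ ≤ 2 * 1 * |(a-b)/2| := by
          apply mul_le_mul _ Real.abs_sin_le_abs (abs_nonneg _) (by norm_num)
          exact mul_le_mul_of_nonneg_left (Real.abs_sin_le_one _) (by norm_num)
      _ = |a - b| := by
          have h2 : |(2:ℝ)| = 2 := by norm_num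
          rw [abs_div, h2]; ring
  have hlips : ∀ a b : ℝ, |sin a - sin b| ≤ |a - b| := by
    intro a b
    rw [Real.sin_sub_sin]
    calc |2 * sin ((a-b)/2) * cos ((a+b)/2)|
        = 2 * |sin ((a-b)/2)| * |cos ((a+b)/2)| := by
          rw [abs_mul, abs_mul]; norm_num
      _ ≤ 2 * |(a-b)/2| * 1 := by
          apply mul_le_mul _ (Real.abs_cos_le_one _) (abs_nonneg _) (by positivity)
          exact mul_le_mul_of_nonneg_left Real.abs_sin_le_abs (by norm_num)
      _ = |a - b| := by
          have h2 : |(2:ℝ)| = 2 := by norm_num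
          rw [abs_div, h2]; ring
  -- use openness at p
  obtain ⟨ε, hε, hball⟩ := Metric.isOpen_iff.mp hOpen p hpmem
  have h2ρ : (0:ℝ) < 2*ρ := by linarith
  obtain ⟨n, k, hnk⟩ := hdense (ε / (2*ρ)) (div_pos hε h2ρ)
  set e := (n:ℝ)*θ - (θ/2 + 2*(k:ℝ)*π) with he
  set w : EuclideanSpace ℝ (Fin 2) := Rot ((n:ℝ)*θ) !₂[ρ * cos 0, ρ * sin 0] with hw
  have hwval : w = !₂[ρ * cos (0 + (n:ℝ)*θ), ρ * sin (0 + (n:ℝ)*θ)] := hL4 _ _ _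
  have hwcos : cos (0 + (n:ℝ)*θ) = cos (θ/2 + e) := by
    have : (0:ℝ) + (n:ℝ)*θ = (θ/2 + e) + (k:ℤ) * (2*π) := by push_cast; rw [he]; ring
    rw [this, Real.cos_add_int_mul_two_pi]
  have hwsin : sin (0 + (n:ℝ)*θ) = sin (θ/2 + e) := by
    have : (0:ℝ) + (n:ℝ)*θ = (θ/2 + e) + (k:ℤ) * (2*π) := by push_cast; rw [he]; ring
    rw [this, Real.sin_add_int_mul_two_pi]
  -- w is not in Ω
  have hwnot : w ∉ Ω := by
    intro hwΩ
    rw [hΩ, Set.mem_iInter] at hwΩ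
    have := (hmem _ _).mp (hwΩ n)
    rw [hw, hcomp, neg_add_cancel, hzero, hQ] at this
    simp only [Set.mem_setOf_eq, PiLp.toLp_apply, Matrix.cons_val_zero, Set.mem_Ioo] at this
    have h' := this.1.2
    rw [Real.cos_zero, mul_one] at h'
    exact lt_irrefl _ h'
  -- but w is close to p
  have hdist : dist w p < ε := by
    have hle : ρ * |e| < ε / 2 := by
      have : ρ * |e| < ρ * (ε / (2*ρ)) := by
        apply mul_lt_mul_of_pos_left hnk hρ
      calc ρ * |e| < ρ * (ε / (2*ρ)) := this
        _ = ε / 2 := by field_simp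
    have h0 : |w 0 - p 0| ≤ ρ * |e| := by
      rw [hwval, hp]
      simp only [PiLp.toLp_apply, Matrix.cons_val_zero]
      rw [hwcos, ← mul_sub, abs_mul, abs_of_pos hρ]
      have : |cos (θ/2 + e) - cos (θ/2)| ≤ |(θ/2 + e) - θ/2| := hlipc _ _
      simpa using mul_le_mul_of_nonneg_left this hρ.le
    have h1 : |w 1 - p 1| ≤ ρ * |e| := by
      rw [hwval, hp]
      simp only [PiLp.toLp_apply, Matrix.cons_val_one, Matrix.head_cons, Matrix.cons_val_zero]
      rw [hwsin, ← mul_sub, abs_mul, abs_of_pos hρ]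
      have : |sin (θ/2 + e) - sin (θ/2)| ≤ |(θ/2 + e) - θ/2| := hlips _ _
      simpa using mul_le_mul_of_nonneg_left this hρ.le
    rw [EuclideanSpace.dist_eq]
    rw [Fin.sum_univ_two]
    rw [Real.sqrt_lt' hε]
    have e0 : dist (w 0) (p 0) = |w 0 - p 0| := Real.dist_eq _ _
    have e1 : dist (w 1) (p 1) = |w 1 - p 1| := Real.dist_eq _ _
    rw [e0, e1]
    have s0 : |w 0 - p 0| ^ 2 ≤ (ρ * |e|) ^ 2 := by
      apply pow_le_pow_left₀ (abs_nonneg _) h0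
    have s1 : |w 1 - p 1| ^ 2 ≤ (ρ * |e|) ^ 2 := by
      apply pow_le_pow_left₀ (abs_nonneg _) h1
    nlinarith [mul_nonneg hρ.le (abs_nonneg e)]
  exact hwnot (hball hdist)
end
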